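/- Tropical determinant is attained: for every n×n real matrix O there exists a permutation σ ∈ S_n with ∑_i o_{i,σ(i)} = |O|_t, and for any matrix B over the Puiseux series field with T(b_{ij}) = o_{ij}, the order of det(B) satisfies ord(det B) ≥ -|O|_t, with equality iff the pseudo-determinant Δ_O(Pc(B)) ≠ 0 (where Pc(B) is the matrix of principal coefficients), equivalently T(det B) ≤ |O|_t when det B ≠ 0. -/

import Mathlib

set_option linter.unusedVariables false

/-- Tropicalization map on the field of (generalized) Puiseux series
`HahnSeries ℝ ℂ`: `T x = - ord x`. -/
noncomputable def T (x : HahnSeries ℝ ℂ) : ℝ := -x.order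

/-- Principal coefficient: the coefficient of the lowest-order term. -/
noncomputable def Pc (x : HahnSeries ℝ ℂ) : ℂ := x.coeff x.order

/-- Tropical determinant of a real square matrix. -/
noncomputable def tropDet {n : ℕ} (O : Matrix (Fin n) (Fin n) ℝ) : ℝ :=
  Finset.univ.sup' Finset.univ_nonempty (fun σ : Equiv.Perm (Fin n) => ∑ i, O i (σ i))

/-- Pseudo-determinant of `A` with respect to the tropical matrix `O`. -/
noncomputable def pseudoDet {n : ℕ} {R : Type*} [CommRing R]
    (O : Matrix (Fin n) (Fin n) ℝ) (A : Matrix (Fin n) (Fin n) R) : R :=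
  ∑ σ ∈ Finset.univ.filter
      (fun σ : Equiv.Perm (Fin n) => ∑ i, O i (σ i) = tropDet O),
    (Equiv.Perm.sign σ : ℤ) • ∏ i, A i (σ i)

/-- coeff at a point as an AddMonoidHom -/
noncomputable def coeffHom (d : ℝ) : HahnSeries ℝ ℂ →+ ℂ :=
  AddMonoidHom.mk' (fun x => x.coeff d) (fun x y => HahnSeries.coeff_add)

lemma prod_facts {ι : Type*} (s : Finset ι) (f : ι → HahnSeries ℝ ℂ)
    (hf : ∀ i ∈ s, f i ≠ 0) :
    (∏ i ∈ s, f i) ≠ 0 ∧ (∏ i ∈ s, f i).order = ∑ i ∈ s, (f i).order ∧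
      (∏ i ∈ s, f i).leadingCoeff = ∏ i ∈ s, (f i).leadingCoeff := by
  classical
  induction s using Finset.cons_induction with
  | empty => simp [HahnSeries.order_one, HahnSeries.leadingCoeff_one]
  | cons a s ha ih =>
    obtain ⟨h1, h2, h3⟩ := ih (fun i hi => hf i (Finset.mem_cons_of_mem hi))
    have hfa : f a ≠ 0 := hf a (Finset.mem_cons_self a s)
    simp only [Finset.prod_cons, Finset.sum_cons]
    refine ⟨mul_ne_zero hfa h1, ?_, ?_⟩
    · rw [HahnSeries.order_mul hfa h1, h2]
    · rw [HahnSeries.leadingCoeff_eq, HahnSeries.order_mul hfa h1,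
        HahnSeries.coeff_mul_order_add_order, h3, HahnSeries.leadingCoeff_eq]

theorem tropDet_attained_and_order_bound {n : ℕ} (O : Matrix (Fin n) (Fin n) ℝ) :
    (∃ σ : Equiv.Perm (Fin n), ∑ i, O i (σ i) = tropDet O) ∧
    ∀ B : Matrix (Fin n) (Fin n) (HahnSeries ℝ ℂ),
      (∀ i j, B i j ≠ 0) → (∀ i j, T (B i j) = O i j) →
      (B.det ≠ 0 → T B.det ≤ tropDet O) ∧
      (pseudoDet O (Matrix.of fun i j => Pc (B i j)) ≠ 0 ↔
        (B.det ≠ 0 ∧ T B.det = tropDet O)) := by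
  classical
  constructor
  · obtain ⟨σ, -, hσ⟩ := Finset.exists_mem_eq_sup' (Finset.univ_nonempty)
      (fun σ : Equiv.Perm (Fin n) => ∑ i, O i (σ i))
    exact ⟨σ, hσ.symm⟩
  intro B hB hTB
  set d : ℝ := -tropDet O with hd
  -- order of entries
  have hordB : ∀ i j, (B i j).order = -(O i j) := by
    intro i j; have := hTB i j; simp only [T] at this; linarith
  -- facts about products
  have hP := fun σ : Equiv.Perm (Fin n) =>
    prod_facts Finset.univ (fun i => B i (σ i)) (fun i _ => hB i (σ i))
  have hPne : ∀ σ : Equiv.Perm (Fin n), (∏ i, B i (σ i)) ≠ 0 := fun σ => (hP σ).1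
  have hPord : ∀ σ : Equiv.Perm (Fin n), (∏ i, B i (σ i)).order = -∑ i, O i (σ i) := by
    intro σ
    rw [(hP σ).2.1]
    simp [hordB]
  have hPlead : ∀ σ : Equiv.Perm (Fin n),
      (∏ i, B i (σ i)).leadingCoeff = ∏ i, Pc (B i (σ i)) := by
    intro σ
    rw [(hP σ).2.2]
    simp [Pc, HahnSeries.leadingCoeff_eq]
  have hle : ∀ σ : Equiv.Perm (Fin n), ∑ i, O i (σ i) ≤ tropDet O := fun σ =>
    Finset.le_sup' (fun σ : Equiv.Perm (Fin n) => ∑ i, O i (σ i)) (Finset.mem_univ σ)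
  -- determinant expansion
  have hdet : B.det = ∑ σ : Equiv.Perm (Fin n),
      (Equiv.Perm.sign σ : ℤ) • ∏ i, B i (σ i) := by
    rw [← Matrix.det_transpose, Matrix.det_apply]
    refine Finset.sum_congr rfl fun σ _ => ?_
    simp [Matrix.transpose_apply, Units.smul_def]
  have hcoeff : ∀ r : ℝ, B.det.coeff r =
      ∑ σ : Equiv.Perm (Fin n), (Equiv.Perm.sign σ : ℤ) • (∏ i, B i (σ i)).coeff r := by
    intro r
    have : B.det.coeff r = coeffHom r B.det := rfl
    rw [this, hdet, map_sum]
    refine Finset.sum_congr rfl fun σ _ => ?_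
    rw [map_zsmul]
    rfl
  -- coefficients below d vanish
  have hlow : ∀ r : ℝ, r < d → B.det.coeff r = 0 := by
    intro r hr
    rw [hcoeff]
    refine Finset.sum_eq_zero fun σ _ => ?_
    have : r < (∏ i, B i (σ i)).order := by
      rw [hPord σ]; have := hle σ; rw [hd] at hr; linarith
    rw [HahnSeries.coeff_eq_zero_of_lt_order this, smul_zero]
  -- coefficient at d equals the pseudo-determinant
  have hkey : B.det.coeff d = pseudoDet O (Matrix.of fun i j => Pc (B i j)) := by
    rw [hcoeff, pseudoDet,
      ← Finset.sum_filter_add_sum_filter_not Finset.univ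
        (fun σ : Equiv.Perm (Fin n) => ∑ i, O i (σ i) = tropDet O)]
    have h2 : ∑ σ ∈ Finset.univ.filter
        (fun σ : Equiv.Perm (Fin n) => ¬ ∑ i, O i (σ i) = tropDet O),
        (Equiv.Perm.sign σ : ℤ) • (∏ i, B i (σ i)).coeff d = 0 := by
      refine Finset.sum_eq_zero fun σ hσ => ?_
      have hne : ∑ i, O i (σ i) ≠ tropDet O := (Finset.mem_filter.mp hσ).2
      have hlt : ∑ i, O i (σ i) < tropDet O := lt_of_le_of_ne (hle σ) hne
      have : d < (∏ i, B i (σ i)).order := by rw [hPord σ, hd]; linarith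
      rw [HahnSeries.coeff_eq_zero_of_lt_order this, smul_zero]
    rw [h2, add_zero]
    refine Finset.sum_congr rfl fun σ hσ => ?_
    have heq : ∑ i, O i (σ i) = tropDet O := (Finset.mem_filter.mp hσ).2
    have hordeq : (∏ i, B i (σ i)).order = d := by rw [hPord σ, heq, hd]
    rw [← hordeq, ← HahnSeries.leadingCoeff_eq, hPlead σ]
    simp [Matrix.of_apply]
  -- the order bound
  have hbound : B.det ≠ 0 → d ≤ B.det.order := by
    intro hBd
    by_contra h
    push_neg at h
    have := hlow B.det.order h
    rw [← HahnSeries.leadingCoeff_eq] at this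
    exact HahnSeries.leadingCoeff_ne_zero.mpr hBd this
  refine ⟨fun hBd => ?_, ?_⟩
  · have := hbound hBd
    simp only [T, hd] at this ⊢
    linarith
  · rw [← hkey]
    constructor
    · intro hcd
      have hBd : B.det ≠ 0 := fun h => hcd (by rw [h, HahnSeries.coeff_zero])
      refine ⟨hBd, ?_⟩
      have h1 : B.det.order ≤ d := HahnSeries.order_le_of_coeff_ne_zero hcd
      have h2 := hbound hBd
      have : B.det.order = d := le_antisymm h1 h2
      simp only [T, this, hd]; ring
    · rintro ⟨hBd, hTd⟩
      have : B.det.order = d := by simp only [T, hd] at hTd ⊢; linarith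
      rw [← this, ← HahnSeries.leadingCoeff_eq]
      exact HahnSeries.leadingCoeff_ne_zero.mpr hBd
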